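/- Let N ⊆ M ⊆ P be a tower where both inclusions admit bases. If {λᵢ : 1 ≤ i ≤ m} is a basis for M/N and {μⱼ : 1 ≤ j ≤ n} is a basis for P/M, then {λᵢμⱼ : 1 ≤ i ≤ m, 1 ≤ j ≤ n} is a basis for P/N. -/
import Mathlib


/- STATEMENT 4: Let N ⊆ M ⊆ P be a tower where both inclusions admit bases.  If
{λᵢ : 1 ≤ i ≤ m} is a basis for M/N and {μⱼ : 1 ≤ j ≤ n} is a basis for P/M, then
{λᵢμⱼ} is a basis for P/N.

A basis for an inclusion A ⊆ B with trace-preserving conditional expectation E_A means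
a finite set {bᵢ} ⊆ B with x = Σᵢ E_A(x bᵢ*) bᵢ for all x ∈ B.  We work in the ambient
algebra P, with N ⊆ M ⊆ P star-subalgebras and conditional expectations E_N, E_M. -/
theorem stmt4 {P : Type*} [Ring P] [StarRing P] [Algebra ℂ P] [StarModule ℂ P]
    (N M : StarSubalgebra ℂ P) (hNM : N ≤ M)
    (EN : P →ₗ[ℂ] P) (EM : P →ₗ[ℂ] P)
    (hENmem : ∀ x ∈ M, EN x ∈ N) (hENfix : ∀ x ∈ N, EN x = x)
    (hENbim : ∀ a ∈ N, ∀ b ∈ N, ∀ x : P, EN (a * x * b) = a * EN x * b)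
    (hEMmem : ∀ x : P, EM x ∈ M) (hEMfix : ∀ x ∈ M, EM x = x)
    (hEMbim : ∀ a ∈ M, ∀ b ∈ M, ∀ x : P, EM (a * x * b) = a * EM x * b)
    (hcomp : ∀ x : P, EN (EM x) = EN x)
    (m n : ℕ)
    (l : Fin m → P) (hl : ∀ i, l i ∈ M)
    (μ : Fin n → P)
    (hlbasis : ∀ x ∈ M, x = ∑ i, EN (x * star (l i)) * l i)
    (hμbasis : ∀ x : P, x = ∑ j, EM (x * star (μ j)) * μ j) :
    ∀ x : P, x = ∑ i : Fin m, ∑ j : Fin n,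
      EN (x * star (l i * μ j)) * (l i * μ j) := by
  intro x
  have key : x = ∑ j : Fin n, ∑ i : Fin m,
      EN (x * star (l i * μ j)) * (l i * μ j) := by
    calc x = ∑ j, EM (x * star (μ j)) * μ j := hμbasis x
      _ = ∑ j, (∑ i, EN (EM (x * star (μ j)) * star (l i)) * l i) * μ j := by
          refine Finset.sum_congr rfl fun j _ => ?_
          rw [← hlbasis _ (hEMmem _)]
      _ = ∑ j : Fin n, ∑ i : Fin m, EN (x * star (l i * μ j)) * (l i * μ j) := by
          refine Finset.sum_congr rfl fun j _ => ?_
          rw [Finset.sum_mul]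
          refine Finset.sum_congr rfl fun i _ => ?_
          have h1 : EM ((1 : P) * (x * star (μ j)) * star (l i))
              = EM (x * star (μ j)) * star (l i) := by
            rw [hEMbim 1 M.one_mem (star (l i)) (star_mem (hl i)), one_mul]
          have h2 : EN (EM (x * star (μ j)) * star (l i))
              = EN (x * star (l i * μ j)) := by
            rw [← h1, one_mul, hcomp, star_mul, ← mul_assoc]
          rw [h2, mul_assoc]
  conv_lhs => rw [key]
  exact Finset.sum_comm
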